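/- arXiv:1703.06487 — 3 statements merged into one kernel-verified Lean document; each statement's English description precedes it below -/
import Mathlib

section
/- Let P be a δ-power protected ε-sample in ℝⁿ (meaning every Delaunay circumball B(c,r) of a Delaunay n-simplex satisfies: no point of P outside the simplex lies in B(c, √(r² + δ²)), and all Delaunay circumradii are at most ε). Then any two adjacent Voronoi vertices c, c' of the Voronoi diagram of P satisfy ‖c − c'‖ ≥ δ²/(4ε). -/
/-- A Delaunay circumball of the point set `P`: the `n+1` points `p i` of `P` are affinely
independent, all lie on the sphere of center `c` and radius `r`, and no point of `P` lies
inside the open ball. -/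
def IsDelaunayBall {n : ℕ} (P : Set (EuclideanSpace ℝ (Fin n)))
    (p : Fin (n + 1) → EuclideanSpace ℝ (Fin n)) (c : EuclideanSpace ℝ (Fin n)) (r : ℝ) :
    Prop :=
  (∀ i, p i ∈ P) ∧ AffineIndependent ℝ p ∧ (∀ i, dist c (p i) = r) ∧ ∀ q ∈ P, r ≤ dist c q

/-- `δ`-power protection: no point of `P` outside a Delaunay simplex lies in the dilated
ball `B(c, √(r² + δ²))`. -/
def PowerProtected {n : ℕ} (P : Set (EuclideanSpace ℝ (Fin n))) (δ : ℝ) : Prop :=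
  ∀ p c r, IsDelaunayBall P p c r →
    ∀ q ∈ P, q ∉ Set.range p → Real.sqrt (r ^ 2 + δ ^ 2) < dist c q

/-- separation of adjacent Voronoi vertices.  If `P` is a `δ`-power protected
`ε`-sample (all Delaunay circumradii at most `ε`), and `c`, `c'` are the circumcenters of two
adjacent Delaunay simplices `a * τ` and `a' * τ`, then `‖c − c'‖ ≥ δ²/(4ε)`. -/
theorem stmt3 (n : ℕ) (P : Set (EuclideanSpace ℝ (Fin n))) (ε δ : ℝ)
    (hε : 0 < ε) (hδ : 0 < δ)
    (hPP : PowerProtected P δ)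
    (hradii : ∀ p c r, IsDelaunayBall P p c r → r ≤ ε)
    (τ : Fin n → EuclideanSpace ℝ (Fin n)) (a a' c c' : EuclideanSpace ℝ (Fin n)) (r r' : ℝ)
    (hσ : IsDelaunayBall P (Fin.cons a τ) c r)
    (hσ' : IsDelaunayBall P (Fin.cons a' τ) c' r')
    (ha : a ∉ Set.range (Fin.cons a' τ : Fin (n + 1) → EuclideanSpace ℝ (Fin n)))
    (hne : c ≠ c') :
    δ ^ 2 / (4 * ε) ≤ dist c c' := by
  cases n with
  | zero => exact absurd (Subsingleton.elim c c') hne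
  | succ m =>
    obtain ⟨hP, hind, hdist, hmin⟩ := hσ
    obtain ⟨hP', hind', hdist', hmin'⟩ := hσ'
    set t := τ 0 with ht
    have hca : dist c a = r := by simpa using hdist 0
    have hct : dist c t = r := by simpa using hdist (Fin.succ 0)
    have hc't : dist c' t = r' := by simpa using hdist' (Fin.succ 0)
    have haP : a ∈ P := by simpa using hP 0
    have hc'a : Real.sqrt (r' ^ 2 + δ ^ 2) < dist c' a :=
      hPP _ _ _ ⟨hP', hind', hdist', hmin'⟩ a haP ha
    have hr0 : 0 ≤ r := hca ▸ dist_nonneg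
    have hrε : r ≤ ε := hradii _ _ _ ⟨hP, hind, hdist, hmin⟩
    have hsq : r' ^ 2 + δ ^ 2 < dist c' a ^ 2 := by
      have h0 : (0:ℝ) ≤ r' ^ 2 + δ ^ 2 := by positivity
      nlinarith [Real.sq_sqrt h0, Real.sqrt_nonneg (r' ^ 2 + δ ^ 2),
        dist_nonneg (x := c') (y := a)]
    have hsq' : r' ^ 2 + δ ^ 2 < ‖c' - a‖ ^ 2 := by rwa [dist_eq_norm] at hsq
    have hca' : ‖c - a‖ = r := by rwa [dist_eq_norm] at hca
    have hct' : ‖c - t‖ = r := by rwa [dist_eq_norm] at hct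
    have hc't' : ‖c' - t‖ = r' := by rwa [dist_eq_norm] at hc't
    have key : ‖c' - a‖ ^ 2 - ‖c - a‖ ^ 2 - (‖c' - t‖ ^ 2 - ‖c - t‖ ^ 2)
        = 2 * (inner ℝ (c - c') (a - t) : ℝ) := by
      simp only [norm_sub_sq_real, inner_sub_left, inner_sub_right]
      ring
    have hinner : (inner ℝ (c - c') (a - t) : ℝ) ≤ ‖c - c'‖ * ‖a - t‖ :=
      real_inner_le_norm _ _
    have hat : ‖a - t‖ ≤ 2 * ε := by
      calc ‖a - t‖ = dist a t := (dist_eq_norm _ _).symm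
        _ ≤ dist a c + dist c t := dist_triangle _ _ _
        _ = r + r := by rw [dist_comm, hca, hct]
        _ ≤ 2 * ε := by linarith
    rw [hca', hct', hc't'] at key
    rw [dist_eq_norm, div_le_iff₀ (by positivity)]
    nlinarith [norm_nonneg (c - c'), norm_nonneg (a - t),
      mul_le_mul_of_nonneg_left hat (norm_nonneg (c - c'))]
end

section
/- (Whitney-type angle bound.) Let H be a hyperplane in ℝⁿ and τ an (n−1)-simplex all of whose vertices lie within distance η of H, and whose minimum altitude is h_min > 0. Then the angle ξ between aff(τ) and H satisfies sin ξ ≤ η·n/h_min. -/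
/-- Whitney-type angle bound: if all vertices of an `(n−1)`-simplex `τ` lie
within distance `η` of the hyperplane `H = {x : ⟪x − x₀, u⟫ = 0}` (with `‖u‖ = 1`), and the
minimum altitude of `τ` is `h_min > 0`, then the angle `ξ` between `aff(τ)` and `H`
satisfies `sin ξ ≤ η·n/h_min`; equivalently, every unit vector `w` in the direction of
`aff(τ)` satisfies `|⟪w, u⟫| ≤ η·n/h_min`. -/
theorem stmt14 (n : ℕ) (hn : 1 ≤ n) (u x₀ : EuclideanSpace ℝ (Fin n)) (hu : ‖u‖ = 1)
    (τ : Fin n → EuclideanSpace ℝ (Fin n)) (hind : AffineIndependent ℝ τ)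
    (η hmin : ℝ) (hη : 0 ≤ η) (hh : 0 < hmin)
    (hclose : ∀ i, |(inner ℝ (τ i - x₀) u : ℝ)| ≤ η)
    (halt : ∀ i, hmin ≤ Metric.infDist (τ i)
        (affineSpan ℝ (τ '' {j | j ≠ i}) : Set (EuclideanSpace ℝ (Fin n)))) :
    ∀ w ∈ (affineSpan ℝ (Set.range τ)).direction,
      ‖w‖ = 1 → |(inner ℝ w u : ℝ)| ≤ η * n / hmin := by
  intro w hw hwnorm
  -- rule out n = 1
  rcases Nat.lt_or_ge n 2 with h2 | h2
  · have hn1 : n = 1 := by omega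
    subst hn1
    exfalso
    have h0 := halt 0
    have hempty : (τ '' {j | j ≠ 0}) = (∅ : Set (EuclideanSpace ℝ (Fin 1))) := by
      ext x
      simp [Subsingleton.elim _ (0 : Fin 1)]
    rw [hempty] at h0
    simp [Metric.infDist_empty] at h0
    linarith
  haveI : NeZero n := ⟨by omega⟩
  haveI : Nontrivial (Fin n) := Fin.nontrivial_iff_two_le.mpr h2
  -- express w as ∑ a j • τ j with ∑ a j = 0
  rw [direction_affineSpan, vectorSpan_range_eq_span_range_vsub_right ℝ τ 0] at hw
  obtain ⟨c, hc⟩ := (Submodule.mem_span_range_iff_exists_fun ℝ).mp hw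
  set a : Fin n → ℝ := fun j => c j - if j = 0 then ∑ i, c i else 0 with ha_def
  have hasum : ∑ j, a j = 0 := by
    simp [ha_def, Finset.sum_sub_distrib, Finset.sum_ite_eq']
  have hwa : w = ∑ j, a j • τ j := by
    rw [← hc]
    simp only [ha_def, sub_smul, ite_smul, zero_smul, Finset.sum_sub_distrib,
      Finset.sum_ite_eq', Finset.mem_univ, if_true, vsub_eq_sub, smul_sub,
      Finset.sum_smul]
  -- facets, projections
  have key : ∀ i : Fin n, |a i| ≤ 1 / hmin := by
    intro i
    obtain ⟨j, hj⟩ := exists_ne i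
    set P : AffineSubspace ℝ (EuclideanSpace ℝ (Fin n)) :=
      affineSpan ℝ (τ '' {j | j ≠ i}) with hP
    haveI : Nonempty P := ⟨⟨τ j, mem_affineSpan ℝ (Set.mem_image_of_mem τ hj)⟩⟩
    set p : EuclideanSpace ℝ (Fin n) :=
      (EuclideanGeometry.orthogonalProjection P (τ i) : EuclideanSpace ℝ (Fin n)) with hp
    have hpmem : p ∈ P := (EuclideanGeometry.orthogonalProjection P (τ i)).2
    set v : EuclideanSpace ℝ (Fin n) := τ i - p with hv
    have hvd : hmin ≤ ‖v‖ := by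
      have := halt i
      have h2 : Metric.infDist (τ i) (P : Set (EuclideanSpace ℝ (Fin n))) ≤ dist (τ i) p :=
        Metric.infDist_le_dist_of_mem hpmem
      rw [dist_eq_norm] at h2
      exact le_trans this h2
    have hvpos : 0 < ‖v‖ := lt_of_lt_of_le hh hvd
    -- orthogonality
    have hperp : ∀ k : Fin n, k ≠ i → (inner ℝ (τ k - p) v : ℝ) = 0 := by
      intro k hk
      have hvo : v ∈ P.directionᗮ := by
        have := EuclideanGeometry.vsub_orthogonalProjection_mem_direction_orthogonal P (τ i)
        simpa [hv, hp, vsub_eq_sub] using this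
      have hkmem : τ k - p ∈ P.direction := by
        have : τ k ∈ P := mem_affineSpan ℝ (Set.mem_image_of_mem τ hk)
        simpa [vsub_eq_sub] using AffineSubspace.vsub_mem_direction this hpmem
      exact hvo (τ k - p) hkmem
    -- inner ℝ w v = a i * ‖v‖ ^ 2
    have hinner : (inner ℝ w v : ℝ) = a i * ‖v‖ ^ 2 := by
      rw [hwa, sum_inner]
      have : ∀ k : Fin n, (inner ℝ (a k • τ k) v : ℝ) = a k * inner ℝ (τ k - p) v
          + a k * inner ℝ p v := by
        intro k
        rw [real_inner_smul_left, ← mul_add, ← inner_add_left]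
        ring_nf
        rw [sub_add_cancel]
      rw [Finset.sum_congr rfl fun k _ => this k, Finset.sum_add_distrib,
        ← Finset.sum_mul, hasum, zero_mul, add_zero,
        Finset.sum_eq_single i (fun k _ hk => by rw [hperp k hk, mul_zero])
          (fun h => absurd (Finset.mem_univ i) h)]
      rw [← hv, real_inner_self_eq_norm_sq]
    have hCS : |(inner ℝ w v : ℝ)| ≤ ‖v‖ := by
      calc |(inner ℝ w v : ℝ)| ≤ ‖w‖ * ‖v‖ := abs_real_inner_le_norm w v
        _ = ‖v‖ := by rw [hwnorm, one_mul]
    rw [hinner, abs_mul, abs_of_nonneg (by positivity : (0:ℝ) ≤ ‖v‖ ^ 2)] at hCS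
    rw [le_div_iff₀ hh]
    nlinarith [abs_nonneg (a i), mul_le_mul_of_nonneg_left hvd (abs_nonneg (a i))]
  -- conclude
  have hiwu : (inner ℝ w u : ℝ) = ∑ j, a j * inner ℝ (τ j - x₀) u := by
    rw [hwa, sum_inner]
    have : ∀ k : Fin n, (inner ℝ (a k • τ k) u : ℝ) = a k * inner ℝ (τ k - x₀) u
        + a k * inner ℝ x₀ u := by
      intro k
      rw [real_inner_smul_left, ← mul_add, ← inner_add_left, sub_add_cancel]
    rw [Finset.sum_congr rfl fun k _ => this k, Finset.sum_add_distrib,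
      ← Finset.sum_mul, hasum, zero_mul, add_zero]
  rw [hiwu]
  calc |∑ j, a j * (inner ℝ (τ j - x₀) u : ℝ)| ≤ ∑ j, |a j * inner ℝ (τ j - x₀) u| :=
        Finset.abs_sum_le_sum_abs _ _
    _ ≤ ∑ _j : Fin n, (1 / hmin) * η := by
        refine Finset.sum_le_sum fun k _ => ?_
        rw [abs_mul]
        exact mul_le_mul (key k) (hclose k) (abs_nonneg _) (by positivity)
    _ = η * n / hmin := by
        rw [Finset.sum_const, Finset.card_univ, Fintype.card_fin, nsmul_eq_mul]
        field_simp
end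

section
/- Let g be a Riemannian metric on a convex open set U ⊆ ℝⁿ whose distance satisfies d_g(x,y) = ‖x−y‖ + δd(x,y) with |δd(x,y)| ≤ (ψ₀−1)‖x−y‖ for all x,y ∈ U, where 1 ≤ ψ₀ ≤ 2. Let p₀,…,p_n ∈ U with pairwise distances and distances to all relevant points at most 4ε, let λ₀,…,λ_n ≥ 0 with Σλ_i = 1, and let x̃ be a minimizer over U of E(x) = Σ_i λ_i·d_g(x,p_i)², while x_e = Σ_i λ_i p_i is the Euclidean barycenter. If ‖x̃ − p_i‖ ≤ 4ε for all i, then ‖x̃ − x_e‖ ≤ √(2·4³·(ψ₀−1))·ε. -/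
/-- the Riemannian center of mass is close to the Euclidean barycenter.  If
`d_g(x,y) = ‖x−y‖ + δd(x,y)` with `|δd(x,y)| ≤ (ψ₀−1)‖x−y‖` on a convex open `U`,
`1 ≤ ψ₀ ≤ 2`, and `x̃` minimizes the energy `Σ λᵢ d_g(·,pᵢ)²` over `U` with all relevant
distances at most `4ε`, then `‖x̃ − Σ λᵢ pᵢ‖ ≤ √(2·4³·(ψ₀−1))·ε`. -/
theorem stmt16 (n : ℕ) (U : Set (EuclideanSpace ℝ (Fin n)))
    (hUc : Convex ℝ U) (hUo : IsOpen U)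
    (dg : EuclideanSpace ℝ (Fin n) → EuclideanSpace ℝ (Fin n) → ℝ)
    (ψ₀ ε : ℝ) (hψ₁ : 1 ≤ ψ₀) (hψ₂ : ψ₀ ≤ 2) (hε : 0 ≤ ε)
    (hd : ∀ x ∈ U, ∀ y ∈ U, |dg x y - ‖x - y‖| ≤ (ψ₀ - 1) * ‖x - y‖)
    (p : Fin (n + 1) → EuclideanSpace ℝ (Fin n)) (hp : ∀ i, p i ∈ U)
    (lam : Fin (n + 1) → ℝ) (hlam : ∀ i, 0 ≤ lam i) (hsum : ∑ i, lam i = 1)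
    (hpp : ∀ i j, dist (p i) (p j) ≤ 4 * ε)
    (xt : EuclideanSpace ℝ (Fin n)) (hxtU : xt ∈ U)
    (hmin : ∀ y ∈ U, ∑ i, lam i * dg xt (p i) ^ 2 ≤ ∑ i, lam i * dg y (p i) ^ 2)
    (hxtp : ∀ i, ‖xt - p i‖ ≤ 4 * ε) :
    ‖xt - ∑ i, lam i • p i‖ ≤ Real.sqrt (2 * 4 ^ 3 * (ψ₀ - 1)) * ε := by
  obtain ⟨xe, hxe⟩ : ∃ v : EuclideanSpace ℝ (Fin n), v = ∑ i, lam i • p i := ⟨_, rfl⟩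
  rw [← hxe]
  have hxeU : xe ∈ U := by
    rw [hxe]; exact hUc.sum_mem (fun i _ => hlam i) hsum (fun i _ => hp i)
  have hxep : ∀ i, ‖xe - p i‖ ≤ 4 * ε := by
    intro i
    have h1 : xe - p i = ∑ j, lam j • (p j - p i) := by
      rw [hxe]
      simp only [smul_sub, Finset.sum_sub_distrib, ← Finset.sum_smul, hsum, one_smul]
    rw [h1]
    calc ‖∑ j, lam j • (p j - p i)‖ ≤ ∑ j, ‖lam j • (p j - p i)‖ := norm_sum_le _ _
      _ ≤ ∑ j : Fin (n+1), lam j * (4 * ε) := by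
          apply Finset.sum_le_sum
          intro j _
          rw [norm_smul, Real.norm_eq_abs, abs_of_nonneg (hlam j)]
          have : ‖p j - p i‖ = dist (p i) (p j) := by
            rw [dist_eq_norm, norm_sub_rev]
          exact mul_le_mul_of_nonneg_left (this ▸ hpp i j) (hlam j)
      _ = 4 * ε := by rw [← Finset.sum_mul, hsum, one_mul]
  -- comparison between riemannian and euclidean energies
  have key : ∀ x ∈ U, (∀ i, ‖x - p i‖ ≤ 4 * ε) →
      |∑ i, lam i * dg x (p i) ^ 2 - ∑ i, lam i * ‖x - p i‖ ^ 2|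
        ≤ 64 * (ψ₀ - 1) * ε ^ 2 := by
    intro x hx hxb
    rw [← Finset.sum_sub_distrib]
    refine (Finset.abs_sum_le_sum_abs _ _).trans ?_
    have hb : ∀ i ∈ Finset.univ, |lam i * dg x (p i) ^ 2 - lam i * ‖x - p i‖ ^ 2|
        ≤ lam i * (64 * (ψ₀ - 1) * ε ^ 2) := by
      intro i _
      rw [← mul_sub, abs_mul, abs_of_nonneg (hlam i)]
      apply mul_le_mul_of_nonneg_left _ (hlam i)
      have hdr := abs_le.mp (hd x hx (p i) (hp i))
      have hr := hxb i
      have hrn : (0:ℝ) ≤ ‖x - p i‖ := norm_nonneg _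
      have hdpos : 0 ≤ dg x (p i) := by nlinarith [hdr.1]
      have hup : dg x (p i) ≤ ψ₀ * ‖x - p i‖ := by linarith [hdr.2]
      have hlo : (2 - ψ₀) * ‖x - p i‖ ≤ dg x (p i) := by linarith [hdr.1]
      have h16 : ‖x - p i‖ ^ 2 ≤ 16 * ε ^ 2 := by nlinarith
      have hq1 : dg x (p i) ^ 2 ≤ ψ₀ ^ 2 * ‖x - p i‖ ^ 2 := by nlinarith
      have hq2 : (2 - ψ₀) ^ 2 * ‖x - p i‖ ^ 2 ≤ dg x (p i) ^ 2 := by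
        nlinarith [mul_nonneg (by linarith : (0:ℝ) ≤ 2 - ψ₀) hrn]
      have h3 : (ψ₀ ^ 2 - 1) * ‖x - p i‖ ^ 2 ≤ (ψ₀ ^ 2 - 1) * (16 * ε ^ 2) :=
        mul_le_mul_of_nonneg_left h16 (by nlinarith)
      have h4 : (1 - (2 - ψ₀) ^ 2) * ‖x - p i‖ ^ 2 ≤ (1 - (2 - ψ₀) ^ 2) * (16 * ε ^ 2) :=
        mul_le_mul_of_nonneg_left h16 (by nlinarith)
      rw [abs_le]
      constructor
      · nlinarith [hq2, h4, mul_nonneg (sub_nonneg.mpr hψ₁) (mul_nonneg hε hε)]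
      · nlinarith [hq1, h3, mul_nonneg (sub_nonneg.mpr hψ₁) (mul_nonneg hε hε)]
    calc ∑ i, |lam i * dg x (p i) ^ 2 - lam i * ‖x - p i‖ ^ 2|
        ≤ ∑ i : Fin (n+1), lam i * (64 * (ψ₀ - 1) * ε ^ 2) := Finset.sum_le_sum hb
      _ = 64 * (ψ₀ - 1) * ε ^ 2 := by rw [← Finset.sum_mul, hsum, one_mul]
  -- euclidean energy identity
  have iden : ∀ x : EuclideanSpace ℝ (Fin n),
      ∑ i, lam i * ‖x - p i‖ ^ 2
        = ‖x - xe‖ ^ 2 + (∑ i, lam i * ‖p i‖ ^ 2 - ‖xe‖ ^ 2) := by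
    intro x
    have e1 : ∀ i, ‖x - p i‖ ^ 2
        = ‖x‖ ^ 2 - 2 * inner ℝ x (p i) + ‖p i‖ ^ 2 := fun i => norm_sub_sq_real x (p i)
    have e2 : (inner ℝ x xe : ℝ) = ∑ i, lam i * inner ℝ x (p i) := by
      rw [hxe, inner_sum]
      exact Finset.sum_congr rfl fun i _ => real_inner_smul_right x (p i) (lam i)
    have e3 : ‖x - xe‖ ^ 2 = ‖x‖ ^ 2 - 2 * inner ℝ x xe + ‖xe‖ ^ 2 :=
      norm_sub_sq_real x xe
    calc ∑ i, lam i * ‖x - p i‖ ^ 2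
        = ∑ i, (lam i * ‖x‖ ^ 2 - lam i * (2 * inner ℝ x (p i)) + lam i * ‖p i‖ ^ 2) := by
          refine Finset.sum_congr rfl fun i _ => ?_; rw [e1 i]; ring
      _ = ‖x‖ ^ 2 - 2 * inner ℝ x xe + ∑ i, lam i * ‖p i‖ ^ 2 := by
          have e4 : ∑ i, lam i * (2 * inner ℝ x (p i)) = 2 * (inner ℝ x xe : ℝ) := by
            rw [e2, Finset.mul_sum]
            exact Finset.sum_congr rfl fun i _ => by ring
          rw [Finset.sum_add_distrib, Finset.sum_sub_distrib, ← Finset.sum_mul, hsum,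
            one_mul, e4]
      _ = ‖x - xe‖ ^ 2 + (∑ i, lam i * ‖p i‖ ^ 2 - ‖xe‖ ^ 2) := by rw [e3]; ring
  have hE : ∑ i, lam i * dg xt (p i) ^ 2 ≤ ∑ i, lam i * dg xe (p i) ^ 2 := hmin xe hxeU
  have b1 := abs_le.mp (key xt hxtU hxtp)
  have b2 := abs_le.mp (key xe hxeU hxep)
  have i1 := iden xt
  have i2 := iden xe
  have hz : ‖xe - xe‖ ^ 2 = 0 := by simp
  have sq_bound : ‖xt - xe‖ ^ 2 ≤ 2 * 4 ^ 3 * (ψ₀ - 1) * ε ^ 2 := by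
    rw [hz] at i2
    linarith [b1.1, b1.2, b2.1, b2.2, hE, i1, i2]
  have h128 : (0:ℝ) ≤ 2 * 4 ^ 3 * (ψ₀ - 1) := by nlinarith [hψ₁]
  calc ‖xt - xe‖ = Real.sqrt (‖xt - xe‖ ^ 2) := (Real.sqrt_sq (norm_nonneg _)).symm
    _ ≤ Real.sqrt (2 * 4 ^ 3 * (ψ₀ - 1) * ε ^ 2) := Real.sqrt_le_sqrt sq_bound
    _ = Real.sqrt (2 * 4 ^ 3 * (ψ₀ - 1)) * ε := by
        rw [Real.sqrt_mul h128, Real.sqrt_sq hε]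
end
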